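/- For all positive integers n, m, k, if k * (2^n - 1) = 2^m - 1 and k > 1, then k ≥ 2^n + 1. -/
import Mathlib

theorem stmt1 (n m k : ℕ) (hn : 0 < n) (hm : 0 < m) (hk : 0 < k)
    (h : k * (2^n - 1) = 2^m - 1) (h1 : 1 < k) : k ≥ 2^n + 1 := by
  have h2n : 2 ≤ 2^n := Nat.one_lt_two_pow_iff.mpr hn.ne'
  have h2m : 1 ≤ 2^m := Nat.one_le_two_pow
  rw [Nat.mul_sub, mul_one] at h
  have hk2n : k ≤ k * 2^n := Nat.le_mul_of_pos_right k (by positivity)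
  have key : k * 2^n + 1 = 2^m + k := by omega
  have hmn : n ≤ m := by
    by_contra hlt
    push_neg at hlt
    have hp : 2^m ≤ 2^n := Nat.pow_le_pow_right (by norm_num) hlt.le
    nlinarith
  have hdvd : 2^n ∣ 2^m := pow_dvd_pow 2 hmn
  obtain ⟨c, hc⟩ := hdvd
  have hmod : k % 2^n = 1 := by
    have hthis : (k * 2^n + 1) % 2^n = (2^n * c + k) % 2^n := by rw [key, hc]
    have hL : (k * 2^n + 1) % 2^n = 1 := by
      rw [Nat.mul_add_mod']; exact Nat.mod_eq_of_lt (by omega)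
    have hR : (2^n * c + k) % 2^n = k % 2^n := Nat.mul_add_mod _ _ _
    omega
  have hdm := Nat.div_add_mod k (2^n)
  rcases Nat.eq_zero_or_pos (k / 2^n) with h0 | h0
  · rw [h0, mul_zero] at hdm
    omega
  · have := Nat.mul_le_mul_left (2^n) h0
    omega
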